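/- In the game G_n (defined by Table 1/Figure 2 of the counterexample), the initial strategy σ_0 defined by σ_0(a_i)=a_{i+1} for i ≤ n and σ_0(a_{n+1})=a_{n+1} is admissible: every cycle avoiding the sink a_{n+1} in the subgraph where player 0 follows σ_0 has even highest priority. -/

import Mathlib

structure PGame (V : Type) where
  E : V → V → Prop
  isP0 : V → Bool
  p : V → ℤ

namespace PGame

variable {V : Type}

/-- A valid positional strategy for player 0: at every player-0 node it follows an edge. -/
def Strat0Valid (G : PGame V) (σ : V → V) : Prop := ∀ v, G.isP0 v = true → G.E v (σ v)

/-- A valid positional strategy for player 1. -/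
def Strat1Valid (G : PGame V) (τ : V → V) : Prop := ∀ v, G.isP0 v = false → G.E v (τ v)

/-- Edges of the subgraph where player 0 follows `σ` (player 1 keeps all edges). -/
def E0 (G : PGame V) (σ : V → V) (v w : V) : Prop :=
  if G.isP0 v then w = σ v else G.E v w

/-- Edges of the subgraph where player 1 follows `τ` (player 0 keeps all edges). -/
def E1 (G : PGame V) (τ : V → V) (v w : V) : Prop :=
  if G.isP0 v then G.E v w else w = τ v

/-- A cycle of length `k` (given by a `k`-periodic sequence) in the relation `R`. -/
def IsCycle (R : V → V → Prop) (k : ℕ) (c : ℕ → V) : Prop :=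
  0 < k ∧ (∀ i, R (c i) (c (i + 1))) ∧ ∀ i, c (i + k) = c i

/-- The highest priority occurring on the (periodic) cycle `c` is even. -/
def TopEven (G : PGame V) (c : ℕ → V) : Prop :=
  ∃ i, Even (G.p (c i)) ∧ ∀ j, G.p (c j) ≤ G.p (c i)

/-- The highest priority occurring on the (periodic) cycle `c` is odd. -/
def TopOdd (G : PGame V) (c : ℕ → V) : Prop :=
  ∃ i, Odd (G.p (c i)) ∧ ∀ j, G.p (c j) ≤ G.p (c i)

/-- `σ` is an admissible player 0 strategy: valid, and every cycle avoiding the sink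
in the subgraph where player 0 follows `σ` has even highest priority. -/
def Admissible0 (G : PGame V) (top : V) (σ : V → V) : Prop :=
  G.Strat0Valid σ ∧ ∀ k c, IsCycle (G.E0 σ) k c → (∀ i, c i ≠ top) → G.TopEven c

/-- `τ` is an admissible player 1 strategy. -/
def Admissible1 (G : PGame V) (top : V) (τ : V → V) : Prop :=
  G.Strat1Valid τ ∧ ∀ k c, IsCycle (G.E1 τ) k c → (∀ i, c i ≠ top) → G.TopOdd c

/-- `top` is a sink node: unique smallest priority and only the self-loop as outgoing edge. -/
def IsSink (G : PGame V) (top : V) : Prop :=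
  (∀ v, v ≠ top → G.p top < G.p v) ∧ (∀ w, G.E top w ↔ w = top)

/-- A sink parity game. -/
def IsSinkGame (G : PGame V) (top : V) : Prop :=
  G.IsSink top ∧ (∃ σ, G.Admissible0 top σ) ∧ (∃ τ, G.Admissible1 top τ)

/-- One move when both players play their positional strategies. -/
def step (G : PGame V) (σ τ : V → V) (v : V) : V := if G.isP0 v then σ v else τ v

/-- The play from `v` under the strategies `σ`, `τ`. -/
def play (G : PGame V) (σ τ : V → V) (v : V) (n : ℕ) : V := (G.step σ τ)^[n] v

end PGame
/-- Nodes of the game `G_n`: `(true, i)` is `a_i`, `(false, i)` is `d_i` (for `1 ≤ i ≤ n+1`);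
other indices are junk nodes that just move to the sink `a_{n+1}`. -/
abbrev VN : Type := Bool × ℕ

/-- Priorities of `G_n`: `p(a_i) = 2i+1` for `i ≤ n`, `p(a_{n+1}) = 1`,
`p(d_i) = 2i+2` (so `p(d_{n+1}) = 2n+4`). -/
def pN (n : ℕ) : VN → ℤ
  | (true, i) => if 1 ≤ i ∧ i ≤ n then 2 * (i : ℤ) + 1 else 1
  | (false, i) => if 1 ≤ i ∧ i ≤ n + 1 then 2 * (i : ℤ) + 2 else 1

/-- Edges of `G_n`: `a_1 → a_2, d_2`; `a_i → a_1, a_{i+1}, d_{i+1}` for `2 ≤ i ≤ n`;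
`a_{n+1} → a_{n+1}` (sink); `d_1 → a_2, d_2`; `d_i → d_1, a_{i+1}, d_{i+1}` for `2 ≤ i ≤ n`;
`d_{n+1} → a_{n+1}`. -/
def EN (n : ℕ) : VN → VN → Prop
  | (true, i), w =>
      if i = n + 1 then w = (true, n + 1)
      else if i = 1 then w = (true, 2) ∨ w = (false, 2)
      else if 2 ≤ i ∧ i ≤ n then w = (true, 1) ∨ w = (true, i + 1) ∨ w = (false, i + 1)
      else w = (true, n + 1)
  | (false, i), w =>
      if i = n + 1 then w = (true, n + 1)
      else if i = 1 then w = (true, 2) ∨ w = (false, 2)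
      else if 2 ≤ i ∧ i ≤ n then w = (false, 1) ∨ w = (true, i + 1) ∨ w = (false, i + 1)
      else w = (true, n + 1)

/-- The game `G_n`: `a`-nodes belong to player 0, `d`-nodes to player 1. -/
def GameN (n : ℕ) : PGame VN := ⟨EN n, Prod.fst, pN n⟩

/-- The initial player 0 strategy: `σ₀(a_i) = a_{i+1}` for `i ≤ n`, `σ₀(a_{n+1}) = a_{n+1}`. -/
def sigma0 (n : ℕ) : VN → VN
  | (true, i) => if 1 ≤ i ∧ i ≤ n then (true, i + 1) else (true, n + 1)
  | (false, _) => (true, n + 1)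

/-- The initial player 1 strategy: `τ₀(d_i) = d_{i+1}` for `i ≤ n`, `τ₀(d_{n+1}) = a_{n+1}`. -/
def tau0 (n : ℕ) : VN → VN
  | (false, i) => if 1 ≤ i ∧ i ≤ n then (false, i + 1) else (true, n + 1)
  | (true, _) => (true, n + 1)

/-- In `G_n`, the initial strategy `σ₀` (with `σ₀(a_i) = a_{i+1}` and
`σ₀(a_{n+1}) = a_{n+1}`) is admissible for player 0: every cycle avoiding the sink
`a_{n+1}` in the subgraph where player 0 follows `σ₀` has even highest priority. -/
theorem stmt9 (n : ℕ) (hn : 1 ≤ n) :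
    (GameN n).Admissible0 (true, n + 1) (sigma0 n) := by
  constructor
  · -- validity
    rintro ⟨b, i⟩ hb
    simp only [GameN] at hb
    subst hb
    simp only [GameN, sigma0, EN, PGame.E0]
    split_ifs with h1 h2 h3 <;> simp_all <;> omega
  · intro k c hcyc htop
    obtain ⟨hk, hstep, hper⟩ := hcyc
    -- no true nodes on the cycle
    have desc : ∀ t i j, c i = (true, j) → 1 ≤ j → j + t = n + 1 → False := by
      intro t
      induction t with
      | zero =>
        intro i j hc h1 he
        exact htop i (by rw [hc]; simp; omega)
      | succ t ih =>
        intro i j hc h1 he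
        have hjn : j ≤ n := by omega
        have h := hstep i
        rw [hc] at h
        simp only [PGame.E0, GameN, sigma0] at h
        rw [if_pos trivial, if_pos ⟨h1, hjn⟩] at h
        exact ih (i+1) (j+1) h (by omega) (by omega)
    have notrue : ∀ i j, c i ≠ (true, j) := by
      intro i j hc
      by_cases hj : 1 ≤ j ∧ j ≤ n
      · exact desc (n + 1 - j) i j hc hj.1 (by omega)
      · have h := hstep i
        rw [hc] at h
        simp only [PGame.E0, GameN, sigma0] at h
        rw [if_pos trivial, if_neg hj] at h
        exact htop (i+1) h
    have allfalse : ∀ i, ∃ j, 1 ≤ j ∧ j ≤ n ∧ c i = (false, j) := by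
      intro i
      obtain ⟨b, j, hc⟩ : ∃ b j, c i = (b, j) := ⟨(c i).1, (c i).2, rfl⟩
      cases b with
      | true => exact absurd hc (notrue i j)
      | false =>
        refine ⟨j, ?_, ?_, hc⟩ <;>
        · by_contra hjx
          have h := hstep i
          rw [hc] at h
          simp only [PGame.E0, GameN, EN] at h
          simp only [Bool.false_eq_true, ↓reduceIte] at h
          split_ifs at h with h1 h2 h3
          · exact notrue (i+1) (n+1) h
          · omega
          · omega
          · exact notrue (i+1) (n+1) h
    -- period / max
    have hperiodic : ∀ m t, c (m + t * k) = c m := by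
      intro m t
      induction t with
      | zero => simp
      | succ t ih => rw [Nat.succ_mul, ← Nat.add_assoc, hper, ih]
    have hmod : ∀ j, c j = c (j % k) := by
      intro j
      conv_lhs => rw [← Nat.mod_add_div' j k]
      exact hperiodic (j % k) (j / k)
    obtain ⟨i, hi, hmax⟩ := Finset.exists_max_image (Finset.range k)
      (fun i => (GameN n).p (c i)) ⟨0, Finset.mem_range.mpr hk⟩
    refine ⟨i, ?_, ?_⟩
    · obtain ⟨j, h1, h2, hc⟩ := allfalse i
      rw [hc]
      show Even (pN n (false, j))
      rw [pN, if_pos ⟨h1, by omega⟩]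
      exact ⟨(j : ℤ) + 1, by ring⟩
    · intro j
      rw [show (GameN n).p (c j) = (GameN n).p (c (j % k)) by rw [← hmod]]
      exact hmax (j % k) (Finset.mem_range.mpr (Nat.mod_lt _ hk))
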